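/- Let k > 0, m ∈ {1,2}, and let φ: ℝ^m → ℂ be a Schwartz function (or compactly supported smooth function). Define the sesquilinear value a(φ) := (i/2) ∫_{ℝ^m} (1/Z(ξ)) |φ̂(ξ)|² dξ, where Z(ξ) = √(k²−|ξ|²) for |ξ| ≤ k and i√(|ξ|²−k²) for |ξ| > k. Then |a(φ)| ≥ (1/(2√2)) ∫_{ℝ^m} (k² + |ξ|²)^{−1/2} |φ̂(ξ)|² dξ. -/

import Mathlib

open MeasureTheory Metric Set
open scoped ENNReal NNReal

lemma pow_sub_pow_le_aux {a b : ℝ} (hb : 0 ≤ b) (hba : b ≤ a) (n : ℕ) :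
    a ^ n - b ^ n ≤ n * (a - b) * (a + 1) ^ n := by
  induction n with
  | zero => simp
  | succ n ih =>
      have ha : 0 ≤ a := hb.trans hba
      have hp : (0:ℝ) ≤ (a + 1) ^ n := pow_nonneg (by linarith) n
      have hq : (0:ℝ) ≤ ↑n * (a - b) * (a + 1) ^ n :=
        mul_nonneg (mul_nonneg (Nat.cast_nonneg n) (by linarith)) hp
      have h2 : a * (a ^ n - b ^ n) ≤ a * (↑n * (a - b) * (a + 1) ^ n) :=
        mul_le_mul_of_nonneg_left ih ha
      have h3 : (a - b) * b ^ n ≤ (a - b) * (a + 1) ^ n :=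
        mul_le_mul_of_nonneg_left (pow_le_pow_left₀ hb (by linarith) n) (by linarith)
      have h4 : a * (↑n * (a - b) * (a + 1) ^ n) ≤ (a+1) * (↑n * (a - b) * (a + 1) ^ n) :=
        mul_le_mul_of_nonneg_right (by linarith) hq
      have h5 : (a - b) * (a + 1) ^ n ≤ (a+1) * ((a - b) * (a + 1) ^ n) :=
        le_mul_of_one_le_left (mul_nonneg (by linarith) hp) (by linarith)
      have h1 : a ^ (n+1) - b ^ (n+1) = a * (a ^ n - b ^ n) + (a - b) * b ^ n := by ring
      have heq : (a+1) * (↑n * (a - b) * (a + 1) ^ n) + (a+1) * ((a - b) * (a + 1) ^ n)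
          = ((n:ℝ)+1) * (a - b) * (a + 1) ^ (n+1) := by
        rw [pow_succ' (a+1) n]; ring
      push_cast
      linarith

lemma lintegral_singular {E : Type*} [NormedAddCommGroup E] [NormedSpace ℝ E]
    [MeasurableSpace E] [BorelSpace E] [FiniteDimensional ℝ E] [Nontrivial E]
    (μ : Measure E) [μ.IsAddHaarMeasure] {k : ℝ} (hk : 0 < k) :
    ∫⁻ ξ in closedBall (0:E) (2*k), ENNReal.ofReal ((Real.sqrt |k - ‖ξ‖|)⁻¹) ∂μ < ∞ := by
  set n := Module.finrank ℝ E with hn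
  set ν := μ.restrict (closedBall (0:E) (2*k)) with hν
  have hmeas : AEMeasurable (fun ξ : E => (Real.sqrt |k - ‖ξ‖|)⁻¹) ν := by fun_prop
  rw [lintegral_eq_lintegral_meas_le ν (Filter.Eventually.of_forall fun ξ => by positivity) hmeas]
  set T := max 1 k⁻¹ with hT
  have hT1 : (1:ℝ) ≤ T := le_max_left _ _
  have hT0 : (0:ℝ) < T := lt_of_lt_of_le one_pos hT1
  set B := μ (ball (0:E) 1) with hB
  set C := 2 * (n:ℝ) * (k+2)^n with hC
  have key : ∀ t ∈ Set.Ioi T, ν {a : E | t ≤ (Real.sqrt |k - ‖a‖|)⁻¹}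
      ≤ ENNReal.ofReal (C * (t^2)⁻¹) * B := by
    intro t ht
    have htT : T < t := ht
    have ht1 : (1:ℝ) ≤ t := hT1.trans htT.le
    have ht0 : (0:ℝ) < t := lt_of_lt_of_le one_pos ht1
    set s := (t^2)⁻¹ with hs
    have hs0 : 0 < s := by positivity
    have hs1 : s ≤ 1 := by
      rw [hs]
      rw [inv_le_one_iff₀]
      right; nlinarith
    have hsk : s ≤ k := by
      have htk : k⁻¹ < t := lt_of_le_of_lt (le_max_right 1 k⁻¹) htT
      have h1 : 1 ≤ k * t := by
        rw [← mul_inv_cancel₀ hk.ne']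
        exact mul_le_mul_of_nonneg_left htk.le hk.le
      rw [hs, inv_le_iff_one_le_mul₀ (by positivity)]
      nlinarith
    have hsub : {a : E | t ≤ (Real.sqrt |k - ‖a‖|)⁻¹}
        ⊆ closedBall (0:E) (k+s) \ ball 0 (k-s) := by
      intro a ha
      simp only [Set.mem_setOf_eq] at ha
      set u := |k - ‖a‖| with hu
      have hu0 : 0 ≤ u := abs_nonneg _
      have hus : u ≤ s := by
        rcases eq_or_lt_of_le hu0 with h0 | h0
        · rw [← h0]; exact hs0.le
        · have hsq : 0 < Real.sqrt u := Real.sqrt_pos.2 h0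
          have h1 : Real.sqrt u * t ≤ 1 := by
            have h2 := mul_le_mul_of_nonneg_left ha hsq.le
            rwa [mul_inv_cancel₀ hsq.ne'] at h2
          have h2 : Real.sqrt u ≤ t⁻¹ := by
            have h3 := mul_le_mul_of_nonneg_right h1 (inv_nonneg.2 ht0.le)
            rwa [mul_assoc, mul_inv_cancel₀ ht0.ne', mul_one, one_mul] at h3
          calc u = Real.sqrt u * Real.sqrt u := (Real.mul_self_sqrt hu0).symm
            _ ≤ t⁻¹ * t⁻¹ := mul_le_mul h2 h2 (Real.sqrt_nonneg u) (by positivity)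
            _ = s := by rw [hs, sq, mul_inv]
      have habs := abs_le.1 hus
      constructor
      · rw [mem_closedBall_zero_iff]; linarith [habs.1]
      · intro hb
        rw [mem_ball_zero_iff] at hb
        linarith [habs.2]
    have hstep : ν {a : E | t ≤ (Real.sqrt |k - ‖a‖|)⁻¹}
        ≤ μ (closedBall (0:E) (k+s) \ ball 0 (k-s)) :=
      le_trans (Measure.le_iff'.1 Measure.restrict_le_self _) (measure_mono hsub)
    have hd : μ (closedBall (0:E) (k+s) \ ball 0 (k-s))
        = ENNReal.ofReal ((k+s)^n) * B - ENNReal.ofReal ((k-s)^n) * B := by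
      rw [measure_diff (ball_subset_closedBall.trans
            (closedBall_subset_closedBall (by linarith)))
          measurableSet_ball.nullMeasurableSet measure_ball_lt_top.ne,
        Measure.addHaar_closedBall μ 0 (by positivity : (0:ℝ) ≤ k+s),
        Measure.addHaar_ball μ 0 (by linarith : (0:ℝ) ≤ k-s)]
    have hba : (k-s)^n ≤ (k+s)^n := pow_le_pow_left₀ (by linarith) (by linarith) n
    have h1 : ENNReal.ofReal ((k+s)^n) * B - ENNReal.ofReal ((k-s)^n) * B
        ≤ ENNReal.ofReal ((k+s)^n - (k-s)^n) * B := by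
      rw [tsub_le_iff_right, ← add_mul, ← ENNReal.ofReal_add (by linarith) (pow_nonneg (by linarith) n)]
      exact le_of_eq (by rw [sub_add_cancel])
    have h2 : (k+s)^n - (k-s)^n ≤ C * (t^2)⁻¹ := by
      have h3 := pow_sub_pow_le_aux (by linarith : (0:ℝ) ≤ k-s) (by linarith : k-s ≤ k+s) n
      have h4 : ((k+s)+1)^n ≤ (k+2)^n := pow_le_pow_left₀ (by linarith) (by linarith) n
      have h5 : (n:ℝ) * ((k+s)-(k-s)) * ((k+s)+1)^n ≤ (n:ℝ) * (2*s) * (k+2)^n := by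
        have he : (k+s)-(k-s) = 2*s := by ring
        rw [he]
        exact mul_le_mul_of_nonneg_left h4 (by positivity)
      have h6 : (n:ℝ) * (2*s) * (k+2)^n = C * (t^2)⁻¹ := by rw [hC, hs]; ring
      linarith
    calc ν {a : E | t ≤ (Real.sqrt |k - ‖a‖|)⁻¹}
        ≤ ENNReal.ofReal ((k+s)^n) * B - ENNReal.ofReal ((k-s)^n) * B := hd ▸ hstep
      _ ≤ ENNReal.ofReal ((k+s)^n - (k-s)^n) * B := h1
      _ ≤ ENNReal.ofReal (C * (t^2)⁻¹) * B :=
          mul_le_mul_left (ENNReal.ofReal_le_ofReal h2) B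
  have hint : IntegrableOn (fun t : ℝ => C * (t^2)⁻¹) (Set.Ioi T) := by
    have h0 := (integrableOn_Ioi_rpow_of_lt (by norm_num : (-2:ℝ) < -1) hT0).const_mul C
    apply MeasureTheory.IntegrableOn.congr_fun h0 ?_ measurableSet_Ioi
    intro x hx
    have hx0 : (0:ℝ) < x := hT0.trans hx
    dsimp only
    rw [Real.rpow_neg hx0.le, show (2:ℝ) = ((2:ℕ):ℝ) by norm_num, Real.rpow_natCast]
  calc ∫⁻ t in Set.Ioi (0:ℝ), ν {a : E | t ≤ (Real.sqrt |k - ‖a‖|)⁻¹}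
      = ∫⁻ t in Set.Ioc 0 T ∪ Set.Ioi T, ν {a : E | t ≤ (Real.sqrt |k - ‖a‖|)⁻¹} := by
        rw [Set.Ioc_union_Ioi_eq_Ioi hT0.le]
    _ ≤ (∫⁻ t in Set.Ioc 0 T, ν {a : E | t ≤ (Real.sqrt |k - ‖a‖|)⁻¹})
        + ∫⁻ t in Set.Ioi T, ν {a : E | t ≤ (Real.sqrt |k - ‖a‖|)⁻¹} := lintegral_union_le _ _ _
    _ ≤ (∫⁻ _ in Set.Ioc 0 T, μ (closedBall (0:E) (2*k)))
        + ∫⁻ t in Set.Ioi T, ENNReal.ofReal (C * (t^2)⁻¹) * B :=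
        add_le_add
          (lintegral_mono fun t => le_trans (measure_mono (Set.subset_univ _))
            (le_of_eq (Measure.restrict_apply_univ _)))
          (setLIntegral_mono' measurableSet_Ioi key)
    _ < ∞ := by
        apply ENNReal.add_lt_top.2
        constructor
        · rw [setLIntegral_const]
          exact ENNReal.mul_lt_top measure_closedBall_lt_top measure_Ioc_lt_top
        · rw [lintegral_mul_const' B _ measure_ball_lt_top.ne]
          exact ENNReal.mul_lt_top hint.setLIntegral_lt_top measure_ball_lt_top

lemma re_case1 (c r x : ℝ) :
    (((c:ℂ)) * (1 + Complex.I) * (1/((r:ℂ)) * (x:ℂ))).re = c * ((1/r) * x) := by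
  simp [Complex.mul_re, Complex.div_re, Complex.normSq_apply]

lemma re_case2 (c s x : ℝ) :
    (((c:ℂ)) * (1 + Complex.I) * (1/(Complex.I * (s:ℂ)) * (x:ℂ))).re = c * ((1/s) * x) := by
  simp [Complex.mul_re, Complex.mul_im, Complex.div_re, Complex.div_im, Complex.normSq_apply]

lemma rpow_neg_half_eq_inv_sqrt {x : ℝ} (hx : 0 ≤ x) :
    x ^ (-(1:ℝ)/2) = (Real.sqrt x)⁻¹ := by
  rw [neg_div, Real.rpow_neg hx, Real.rpow_div_two_eq_sqrt 1 hx, Real.rpow_one]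

lemma key_coercive {E : Type*} [NormedAddCommGroup E] [NormedSpace ℝ E]
    [MeasurableSpace E] [BorelSpace E] [FiniteDimensional ℝ E] [Nontrivial E]
    (μ : Measure E) [μ.IsAddHaarMeasure] {k : ℝ} (hk : 0 < k)
    (F : E → ℝ) (hFc : Continuous F) (hF0 : ∀ ξ, 0 ≤ F ξ) (hFi : Integrable F μ)
    {MF : ℝ} (hFb : ∀ ξ, F ξ ≤ MF)
    (hLS : ∫⁻ ξ in closedBall (0:E) (2*k), ENNReal.ofReal ((Real.sqrt |k - ‖ξ‖|)⁻¹) ∂μ < ∞) :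
    (1 / (2 * Real.sqrt 2)) * ∫ ξ, (k ^ 2 + ‖ξ‖ ^ 2) ^ (-(1:ℝ)/2) * F ξ ∂μ
    ≤ ‖(Complex.I / 2) *
        ∫ ξ, (1 / (if ‖ξ‖ ≤ k then (Real.sqrt (k ^ 2 - ‖ξ‖ ^ 2) : ℂ)
              else Complex.I * (Real.sqrt (‖ξ‖ ^ 2 - k ^ 2) : ℂ))) * (F ξ : ℂ) ∂μ‖ := by
  have hMF : 0 ≤ MF := le_trans (hF0 0) (hFb 0)
  set Z : E → ℂ := fun ξ => if ‖ξ‖ ≤ k then (Real.sqrt (k ^ 2 - ‖ξ‖ ^ 2) : ℂ)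
      else Complex.I * (Real.sqrt (‖ξ‖ ^ 2 - k ^ 2) : ℂ) with hZ
  set g : E → ℂ := fun ξ => (1 / Z ξ) * (F ξ : ℂ) with hg
  -- norm of g
  have hgnorm : ∀ ξ, ‖g ξ‖ = (Real.sqrt |k ^ 2 - ‖ξ‖ ^ 2|)⁻¹ * F ξ := by
    intro ξ
    rw [hg, norm_mul, Complex.norm_real, Real.norm_of_nonneg (hF0 ξ)]
    congr 1
    by_cases h : ‖ξ‖ ≤ k
    · have h0 : (0:ℝ) ≤ k ^ 2 - ‖ξ‖ ^ 2 := by nlinarith [norm_nonneg ξ]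
      simp only [hZ, if_pos h, one_div, norm_inv, Complex.norm_real,
        Real.norm_of_nonneg (Real.sqrt_nonneg _), abs_of_nonneg h0]
    · push_neg at h
      have h0 : k ^ 2 - ‖ξ‖ ^ 2 ≤ 0 := by nlinarith
      simp only [hZ, if_neg (not_le.2 h), one_div, norm_inv, norm_mul, Complex.norm_I,
        Complex.norm_real, Real.norm_of_nonneg (Real.sqrt_nonneg _), one_mul,
        abs_of_nonpos h0, neg_sub]
  -- measurability of g
  have hgm : AEStronglyMeasurable g μ := by
    have hZm : Measurable Z := by
      apply Measurable.ite (measurableSet_le measurable_norm measurable_const)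
      · exact (Complex.continuous_ofReal.comp
          ((continuous_const.sub (continuous_norm.pow 2)).sqrt)).measurable
      · exact (continuous_const.mul (Complex.continuous_ofReal.comp
          (((continuous_norm.pow 2).sub continuous_const).sqrt))).measurable
    have hge : g = fun ξ => (Z ξ)⁻¹ * (F ξ : ℂ) := by
      funext ξ
      show 1 / Z ξ * (F ξ:ℂ) = (Z ξ)⁻¹ * (F ξ:ℂ)
      rw [one_div]
    rw [hge]
    exact (hZm.inv.mul (Complex.measurable_ofReal.comp hFc.measurable)).aestronglyMeasurable
  -- integrability of g
  have hgint : Integrable g μ := by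
    set C1 : ℝ := MF * (Real.sqrt k)⁻¹ with hC1
    have hC1nn : 0 ≤ C1 := mul_nonneg hMF (by positivity)
    set G : E → ℝ := fun ξ =>
      (closedBall (0:E) (2*k)).indicator (fun ξ => C1 * (Real.sqrt |k - ‖ξ‖|)⁻¹) ξ
        + k⁻¹ * F ξ with hG
    have hsing_meas : Measurable (fun ξ : E => C1 * (Real.sqrt |k - ‖ξ‖|)⁻¹) := by fun_prop
    have hG1 : Integrable
        ((closedBall (0:E) (2*k)).indicator (fun ξ => C1 * (Real.sqrt |k - ‖ξ‖|)⁻¹)) μ := by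
      rw [integrable_indicator_iff measurableSet_closedBall]
      refine ⟨hsing_meas.aestronglyMeasurable.restrict, ?_⟩
      rw [hasFiniteIntegral_iff_ofReal (Filter.Eventually.of_forall fun ξ => by positivity)]
      calc ∫⁻ ξ in closedBall (0:E) (2*k), ENNReal.ofReal (C1 * (Real.sqrt |k - ‖ξ‖|)⁻¹) ∂μ
          = ∫⁻ ξ in closedBall (0:E) (2*k),
              ENNReal.ofReal C1 * ENNReal.ofReal ((Real.sqrt |k - ‖ξ‖|)⁻¹) ∂μ := by
            congr 1; funext ξ; rw [ENNReal.ofReal_mul hC1nn]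
        _ = ENNReal.ofReal C1
            * ∫⁻ ξ in closedBall (0:E) (2*k), ENNReal.ofReal ((Real.sqrt |k - ‖ξ‖|)⁻¹) ∂μ :=
            lintegral_const_mul' _ _ ENNReal.ofReal_ne_top
        _ < ∞ := ENNReal.mul_lt_top ENNReal.ofReal_lt_top hLS
    have hGint : Integrable G μ := hG1.add (hFi.const_mul k⁻¹)
    apply Integrable.mono' hGint hgm
    apply Filter.Eventually.of_forall
    intro ξ
    simp only [hgnorm ξ, hG]
    by_cases hξ : ξ ∈ closedBall (0:E) (2*k)
    · rw [indicator_of_mem hξ]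
      have hmain : (Real.sqrt |k ^ 2 - ‖ξ‖ ^ 2|)⁻¹ * F ξ ≤ C1 * (Real.sqrt |k - ‖ξ‖|)⁻¹ := by
        by_cases hek : ‖ξ‖ = k
        · have : |k ^ 2 - ‖ξ‖ ^ 2| = 0 := by rw [hek]; simp
          rw [this]
          simp only [Real.sqrt_zero, inv_zero, zero_mul]
          positivity
        · have habs : |k ^ 2 - ‖ξ‖ ^ 2| = |k - ‖ξ‖| * (k + ‖ξ‖) := by
            have h1 : k ^ 2 - ‖ξ‖ ^ 2 = (k - ‖ξ‖) * (k + ‖ξ‖) := by ring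
            rw [h1, abs_mul, abs_of_pos (by positivity : (0:ℝ) < k + ‖ξ‖)]
          have hpos : 0 < |k - ‖ξ‖| := abs_pos.2 (sub_ne_zero.2 (fun h => hek (by linarith)))
          have h2 : k * |k - ‖ξ‖| ≤ |k ^ 2 - ‖ξ‖ ^ 2| := by
            rw [habs]
            rw [mul_comm]
            exact mul_le_mul_of_nonneg_left (by linarith [norm_nonneg ξ]) hpos.le
          have h3 : (Real.sqrt |k ^ 2 - ‖ξ‖ ^ 2|)⁻¹ ≤ (Real.sqrt (k * |k - ‖ξ‖|))⁻¹ := by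
            apply inv_anti₀
            · exact Real.sqrt_pos.2 (by positivity)
            · exact Real.sqrt_le_sqrt h2
          have h4 : (Real.sqrt (k * |k - ‖ξ‖|))⁻¹
              = (Real.sqrt k)⁻¹ * (Real.sqrt |k - ‖ξ‖|)⁻¹ := by
            rw [Real.sqrt_mul hk.le, mul_inv]
          calc (Real.sqrt |k ^ 2 - ‖ξ‖ ^ 2|)⁻¹ * F ξ
              ≤ (Real.sqrt (k * |k - ‖ξ‖|))⁻¹ * MF :=
                mul_le_mul h3 (hFb ξ) (hF0 ξ) (by positivity)
            _ = C1 * (Real.sqrt |k - ‖ξ‖|)⁻¹ := by rw [h4, hC1]; ring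
      have h5 : 0 ≤ k⁻¹ * F ξ := mul_nonneg (by positivity) (hF0 ξ)
      calc (Real.sqrt |k ^ 2 - ‖ξ‖ ^ 2|)⁻¹ * F ξ
          ≤ C1 * (Real.sqrt |k - ‖ξ‖|)⁻¹ := hmain
        _ ≤ C1 * (Real.sqrt |k - ‖ξ‖|)⁻¹ + k⁻¹ * F ξ := le_add_of_nonneg_right h5
    · rw [indicator_of_notMem hξ, zero_add]
      rw [mem_closedBall_zero_iff, not_le] at hξ
      have h6 : k ≤ Real.sqrt |k ^ 2 - ‖ξ‖ ^ 2| := by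
        rw [show |k ^ 2 - ‖ξ‖ ^ 2| = ‖ξ‖ ^ 2 - k ^ 2 by
          rw [abs_of_nonpos (by nlinarith)]; ring]
        conv_lhs => rw [← Real.sqrt_sq hk.le]
        apply Real.sqrt_le_sqrt
        nlinarith
      have h7 : (Real.sqrt |k ^ 2 - ‖ξ‖ ^ 2|)⁻¹ ≤ k⁻¹ :=
        inv_anti₀ hk h6
      exact mul_le_mul_of_nonneg_right h7 (hF0 ξ)
  -- main estimate
  set c : ℝ := 1 / (2 * Real.sqrt 2) with hc
  have hc0 : 0 < c := by rw [hc]; positivity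
  set u : ℂ := (c : ℂ) * (1 + Complex.I) with hu
  set w : ℂ := (((Real.sqrt 2)⁻¹ : ℝ) : ℂ) * (1 - Complex.I) with hw
  have hs2 : (0:ℝ) < Real.sqrt 2 := Real.sqrt_pos.2 two_pos
  have habsw : ‖w‖ = 1 := by
    rw [hw, norm_mul, Complex.norm_real, Real.norm_of_nonneg (by positivity)]
    have h1 : ‖1 - Complex.I‖ = Real.sqrt 2 := by
      rw [Complex.norm_def, Complex.normSq_apply]
      norm_num
    rw [h1, inv_mul_cancel₀ hs2.ne']
  have huw : u = w * (Complex.I / 2) := by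
    rw [hu, hw, hc]
    rw [Complex.ext_iff]
    constructor <;>
      simp [Complex.mul_re, Complex.mul_im, Complex.div_re, Complex.div_im,
        Complex.normSq_apply] <;> field_simp
  have hsphere : ∀ᵐ ξ ∂μ, ‖ξ‖ ≠ k := by
    rw [ae_iff]
    simp only [not_not]
    have hset : {ξ : E | ‖ξ‖ = k} = sphere (0:E) k := by
      ext ξ; simp [mem_sphere_zero_iff_norm]
    rw [hset]
    exact Measure.addHaar_sphere_of_ne_zero μ 0 hk.ne'
  have hrpow_cont : Continuous (fun ξ : E => (k ^ 2 + ‖ξ‖ ^ 2) ^ (-(1:ℝ)/2)) := by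
    apply Continuous.rpow_const (continuous_const.add (continuous_norm.pow 2))
    intro ξ; exact Or.inl (ne_of_gt (by positivity : (0:ℝ) < k ^ 2 + ‖ξ‖ ^ 2))
  have hL : Integrable (fun ξ => (k ^ 2 + ‖ξ‖ ^ 2) ^ (-(1:ℝ)/2) * F ξ) μ := by
    apply Integrable.mono' (hFi.const_mul k⁻¹) (hrpow_cont.mul hFc).aestronglyMeasurable
    apply Filter.Eventually.of_forall
    intro ξ
    show ‖(k ^ 2 + ‖ξ‖ ^ 2) ^ (-(1:ℝ)/2) * F ξ‖ ≤ k⁻¹ * F ξ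
    rw [Real.norm_of_nonneg (mul_nonneg (Real.rpow_nonneg (by positivity) _) (hF0 ξ))]
    apply mul_le_mul_of_nonneg_right _ (hF0 ξ)
    have h1 : (k^2 : ℝ) ^ (-(1:ℝ)/2) = k⁻¹ := by
      rw [rpow_neg_half_eq_inv_sqrt (by positivity), Real.sqrt_sq hk.le]
    rw [← h1]
    exact Real.rpow_le_rpow_of_nonpos (by positivity) (by nlinarith [sq_nonneg ‖ξ‖])
      (by norm_num)
  have hure : Integrable (fun ξ => (u * g ξ).re) μ :=
    (Complex.reCLM : ℂ →L[ℝ] ℝ).integrable_comp (hgint.const_mul u)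
  have hae : ∀ᵐ ξ ∂μ, c * ((k ^ 2 + ‖ξ‖ ^ 2) ^ (-(1:ℝ)/2) * F ξ) ≤ (u * g ξ).re := by
    filter_upwards [hsphere] with ξ hξ
    have hbase : (k ^ 2 + ‖ξ‖ ^ 2) ^ (-(1:ℝ)/2) = (Real.sqrt (k^2 + ‖ξ‖^2))⁻¹ :=
      rpow_neg_half_eq_inv_sqrt (by positivity)
    by_cases h : ‖ξ‖ ≤ k
    · have hlt : ‖ξ‖ < k := lt_of_le_of_ne h hξ
      have hr0 : 0 < Real.sqrt (k^2 - ‖ξ‖^2) :=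
        Real.sqrt_pos.2 (by nlinarith [norm_nonneg ξ])
      have hgval : g ξ = 1/((Real.sqrt (k^2 - ‖ξ‖^2) : ℝ):ℂ) * ((F ξ : ℝ):ℂ) := by
        rw [hg]
        show 1 / Z ξ * (F ξ:ℂ) = _
        rw [hZ]
        simp only [if_pos h]
      rw [hu, hgval, re_case1 c (Real.sqrt (k^2 - ‖ξ‖^2)) (F ξ)]
      apply mul_le_mul_of_nonneg_left _ hc0.le
      apply mul_le_mul_of_nonneg_right _ (hF0 ξ)
      rw [hbase, one_div]
      exact inv_anti₀ hr0 (Real.sqrt_le_sqrt (by nlinarith [sq_nonneg ‖ξ‖]))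
    · push_neg at h
      have hr0 : 0 < Real.sqrt (‖ξ‖^2 - k^2) := Real.sqrt_pos.2 (by nlinarith)
      have hgval : g ξ = 1/(Complex.I * ((Real.sqrt (‖ξ‖^2 - k^2) : ℝ):ℂ)) * ((F ξ : ℝ):ℂ) := by
        rw [hg]
        show 1 / Z ξ * (F ξ:ℂ) = _
        rw [hZ]
        simp only [if_neg (not_le.2 h)]
      rw [hu, hgval, re_case2 c (Real.sqrt (‖ξ‖^2 - k^2)) (F ξ)]
      apply mul_le_mul_of_nonneg_left _ hc0.le
      apply mul_le_mul_of_nonneg_right _ (hF0 ξ)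
      rw [hbase, one_div]
      exact inv_anti₀ hr0 (Real.sqrt_le_sqrt (by nlinarith [sq_nonneg k]))
  calc c * ∫ ξ, (k ^ 2 + ‖ξ‖ ^ 2) ^ (-(1:ℝ)/2) * F ξ ∂μ
      = ∫ ξ, c * ((k ^ 2 + ‖ξ‖ ^ 2) ^ (-(1:ℝ)/2) * F ξ) ∂μ := (integral_const_mul c _).symm
    _ ≤ ∫ ξ, (u * g ξ).re ∂μ := integral_mono_ae (hL.const_mul c) hure hae
    _ = (u * ∫ ξ, g ξ ∂μ).re := by
        rw [show (∫ ξ, (u * g ξ).re ∂μ) = (∫ ξ, u * g ξ ∂μ).re from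
          Complex.reCLM.integral_comp_comm (hgint.const_mul u), integral_const_mul]
    _ ≤ ‖u * ∫ ξ, g ξ ∂μ‖ := Complex.re_le_norm _
    _ = ‖w * ((Complex.I/2) * ∫ ξ, g ξ ∂μ)‖ := by rw [huw, mul_assoc]
    _ = ‖(Complex.I/2) * ∫ ξ, g ξ ∂μ‖ := by rw [norm_mul, habsw, one_mul]

/-- Coercivity of the single-layer operator symbol: for Schwartz `φ` on `ℝ^m`, `m ∈ {1,2}`,
with `a(φ) = (i/2) ∫ (1/Z(ξ)) |φ̂(ξ)|² dξ`, one has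
`|a(φ)| ≥ (1/(2√2)) ∫ (k²+|ξ|²)^{-1/2} |φ̂(ξ)|² dξ`. -/
theorem stmt_3 (m : ℕ) (hm : m = 1 ∨ m = 2) (k : ℝ) (hk : 0 < k)
    (φ : SchwartzMap (EuclideanSpace ℝ (Fin m)) ℂ) :
    (1 / (2 * Real.sqrt 2)) *
      ∫ ξ : EuclideanSpace ℝ (Fin m),
        (k ^ 2 + ‖ξ‖ ^ 2) ^ (-(1:ℝ)/2) *
          ‖((2 * Real.pi) ^ (-(m : ℝ) / 2) : ℝ) •
            ∫ x : EuclideanSpace ℝ (Fin m),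
              Complex.exp (-Complex.I * ((inner ℝ ξ x : ℝ) : ℂ)) • φ x‖ ^ 2
    ≤ norm ((Complex.I / 2) *
        ∫ ξ : EuclideanSpace ℝ (Fin m),
          (1 / (if ‖ξ‖ ≤ k then (Real.sqrt (k ^ 2 - ‖ξ‖ ^ 2) : ℂ)
                else Complex.I * (Real.sqrt (‖ξ‖ ^ 2 - k ^ 2) : ℂ))) *
            (‖((2 * Real.pi) ^ (-(m : ℝ) / 2) : ℝ) •
              ∫ x : EuclideanSpace ℝ (Fin m),
                Complex.exp (-Complex.I * ((inner ℝ ξ x : ℝ) : ℂ)) • φ x‖ ^ 2 : ℝ)) := by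
  haveI : Nontrivial (EuclideanSpace ℝ (Fin m)) := by
    apply Module.nontrivial_of_finrank_pos (R := ℝ)
    rw [finrank_euclideanSpace_fin]
    omega
  have h2π : (0:ℝ) < 2 * Real.pi := by positivity
  set ψ : SchwartzMap (EuclideanSpace ℝ (Fin m)) ℂ :=
    SchwartzMap.fourierTransformCLM ℂ φ with hψ
  have hX : ∀ ξ : EuclideanSpace ℝ (Fin m),
      (∫ x : EuclideanSpace ℝ (Fin m),
          Complex.exp (-Complex.I * ((inner ℝ ξ x : ℝ) : ℂ)) • φ x)
        = ψ ((2 * Real.pi)⁻¹ • ξ) := by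
    intro ξ
    rw [hψ]
    simp only [SchwartzMap.fourierTransformCLM_apply]
    rw [SchwartzMap.fourier_coe, Real.fourier_eq']
    congr 1
    funext x
    congr 1
    have hinner : (inner ℝ x ((2 * Real.pi)⁻¹ • ξ) : ℝ)
        = (2 * Real.pi)⁻¹ * (inner ℝ x ξ : ℝ) := real_inner_smul_right x ξ _
    rw [hinner, real_inner_comm x ξ]
    generalize (inner ℝ x ξ : ℝ) = t
    have h2 : -2 * Real.pi * ((2 * Real.pi)⁻¹ * t) = -t := by
      field_simp
    rw [h2]
    congr 1
    push_cast
    ring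
  simp only [hX]
  set c2 : ℝ := (2 * Real.pi) ^ (-(m : ℝ) / 2) with hc2
  have hc2pos : 0 < c2 := Real.rpow_pos_of_pos h2π _
  set F : EuclideanSpace ℝ (Fin m) → ℝ :=
    fun ξ => ‖c2 • ψ ((2 * Real.pi)⁻¹ • ξ)‖ ^ 2 with hF
  have hψc : Continuous ψ := ψ.continuous
  have hFc : Continuous F :=
    (((hψc.comp (continuous_const_smul _)).const_smul c2).norm).pow 2
  have hF0 : ∀ ξ, 0 ≤ F ξ := fun ξ => by positivity
  set S : ℝ := (SchwartzMap.seminorm ℝ 0 0) ψ with hS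
  have hSnn : 0 ≤ S := apply_nonneg _ _
  have hψb : ∀ y, ‖ψ y‖ ≤ S := fun y => SchwartzMap.norm_le_seminorm ℝ ψ y
  have hFb : ∀ ξ, F ξ ≤ (c2 * S) ^ 2 := by
    intro ξ
    rw [hF]
    apply pow_le_pow_left₀ (norm_nonneg _)
    rw [norm_smul, Real.norm_of_nonneg hc2pos.le]
    exact mul_le_mul_of_nonneg_left (hψb _) hc2pos.le
  have hint1 : Integrable (fun ξ => ψ ((2 * Real.pi)⁻¹ • ξ)) volume :=
    (ψ.integrable).comp_smul (inv_ne_zero h2π.ne')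
  have hFi : Integrable F volume := by
    apply Integrable.mono' ((hint1.norm).const_mul (c2 ^ 2 * S)) hFc.aestronglyMeasurable
    apply Filter.Eventually.of_forall
    intro ξ
    rw [Real.norm_of_nonneg (hF0 ξ)]
    simp only [hF]
    have h1 : ‖c2 • ψ ((2 * Real.pi)⁻¹ • ξ)‖ = c2 * ‖ψ ((2 * Real.pi)⁻¹ • ξ)‖ := by
      rw [norm_smul, Real.norm_of_nonneg hc2pos.le]
    rw [h1, mul_pow]
    calc c2 ^ 2 * ‖ψ ((2 * Real.pi)⁻¹ • ξ)‖ ^ 2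
        ≤ c2 ^ 2 * (S * ‖ψ ((2 * Real.pi)⁻¹ • ξ)‖) := by
          apply mul_le_mul_of_nonneg_left _ (by positivity)
          rw [sq]
          exact mul_le_mul_of_nonneg_right (hψb _) (norm_nonneg _)
      _ = c2 ^ 2 * S * ‖ψ ((2 * Real.pi)⁻¹ • ξ)‖ := by ring
  exact key_coercive volume hk F hFc hF0 hFi hFb (lintegral_singular volume hk)
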